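/- For positive integers a, b with a > 2b, every graph homomorphism from the Kneser graph KG_{a,b} to itself is an automorphism (i.e., a graph isomorphism). -/

import Mathlib

open Finset

section KneserCircle

variable {a b : ℕ}



variable {a b : ℕ}

/-- the arc of length `b` starting at position `j` in cyclic order `f` -/
def arc (b : ℕ) (f : ZMod a ≃ Fin a) (j : ZMod a) : Finset (Fin a) :=
  (Finset.range b).image (fun (t : ℕ) => f (j + (t : ZMod a)))

lemma natCast_zmod_inj (hab : 2 * b + 1 ≤ a) {t s : ℕ} (ht : t < a) (hs : s < a)
    (h : (t : ZMod a) = (s : ZMod a)) : t = s := by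
  haveI : NeZero a := ⟨by omega⟩
  have := congrArg ZMod.val h
  rwa [ZMod.val_natCast_of_lt ht, ZMod.val_natCast_of_lt hs] at this

lemma zmod_val_cast (hab : 2 * b + 1 ≤ a) (j : ZMod a) : ((j.val : ℕ) : ZMod a) = j := by
  haveI : NeZero a := ⟨by omega⟩
  rw [ZMod.natCast_val, ZMod.cast_id]

lemma card_arc (hab : 2 * b + 1 ≤ a) (f : ZMod a ≃ Fin a) (j : ZMod a) :
    (arc b f j).card = b := by
  rw [arc, Finset.card_image_of_injOn, Finset.card_range]
  intro t ht s hs h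
  simp only [Finset.coe_range, Set.mem_Iio] at ht hs
  have h2 : j + (t : ZMod a) = j + (s : ZMod a) := f.injective h
  exact natCast_zmod_inj hab (by omega) (by omega) (add_left_cancel h2)

lemma mem_arc {f : ZMod a ≃ Fin a} {j : ZMod a} {x : Fin a} :
    x ∈ arc b f j ↔ ∃ t < b, f (j + (t : ZMod a)) = x := by
  simp [arc]

/-- two arcs overlap -/
def rel (a b : ℕ) (j k : ZMod a) : Prop :=
  ∃ t s : ℕ, t < b ∧ s < b ∧ j + (t : ZMod a) = k + (s : ZMod a)

lemma rel_of_not_disjoint {f : ZMod a ≃ Fin a} {j k : ZMod a}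
    (h : ¬ Disjoint (arc b f j) (arc b f k)) : rel a b j k := by
  rw [Finset.not_disjoint_iff] at h
  obtain ⟨x, hx1, hx2⟩ := h
  rw [mem_arc] at hx1 hx2
  obtain ⟨t, ht, hxt⟩ := hx1
  obtain ⟨s, hs, hxs⟩ := hx2
  exact ⟨t, s, ht, hs, f.injective (hxt.trans hxs.symm)⟩

lemma not_rel_sub_b (hab : 2 * b + 1 ≤ a) {j k : ZMod a}
    (h : k = j - (b : ZMod a)) : ¬ rel a b j k := by
  rintro ⟨t, s, ht, hs, he⟩
  subst h
  have : ((t + b : ℕ) : ZMod a) = (s : ZMod a) := by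
    push_cast
    linear_combination he
  have := natCast_zmod_inj hab (by omega) (by omega) this
  omega

/-- values of offsets between overlapping arcs -/
lemma rel_val (hab : 2 * b + 1 ≤ a) {j k : ZMod a} (h : rel a b j k) :
    (j - k).val < b ∨ (a - b + 1 ≤ (j - k).val ∧ (j - k).val < a) := by
  haveI : NeZero a := ⟨by omega⟩
  obtain ⟨t, s, ht, hs, he⟩ := h
  have hd : j - k = ((s : ZMod a) - (t : ZMod a)) := by linear_combination he
  rcases le_or_gt t s with hle | hlt
  · left
    have : j - k = ((s - t : ℕ) : ZMod a) := by rw [hd]; push_cast [hle]; ring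
    rw [this, ZMod.val_natCast_of_lt (by omega)]
    omega
  · right
    have : j - k = ((a - (t - s) : ℕ) : ZMod a) := by
      rw [hd]
      have ha0 : ((a : ℕ) : ZMod a) = 0 := ZMod.natCast_self a
      rw [Nat.cast_sub (by omega : t - s ≤ a), Nat.cast_sub (by omega : s ≤ t), ha0]
      ring
    rw [this, ZMod.val_natCast_of_lt (by omega)]
    omega

/-- The key numerical map for Katona's circle argument. -/
noncomputable def gval (a b : ℕ) (j0 j : ZMod a) : ℕ :=
  if (j - j0).val < b then (j - j0).val else (j - j0).val + b - a

lemma gval_lt (hab : 2 * b + 1 ≤ a) {j0 j : ZMod a} (h : rel a b j j0) :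
    gval a b j0 j < b := by
  rcases rel_val hab h with h1 | h2
  · rw [gval, if_pos h1]; exact h1
  · rw [gval, if_neg (by omega)]; omega

lemma gval_inj (hab : 2 * b + 1 ≤ a) {j0 : ZMod a} {j1 j2 : ZMod a}
    (h1 : rel a b j1 j0) (h2 : rel a b j2 j0) (h12 : rel a b j1 j2) (h21 : rel a b j2 j1)
    (he : gval a b j0 j1 = gval a b j0 j2) : j1 = j2 := by
  haveI : NeZero a := ⟨by omega⟩
  have hv1 := rel_val hab h1
  have hv2 := rel_val hab h2
  rw [gval, gval] at he
  split_ifs at he with c1 c2 c2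
  · have : j1 - j0 = j2 - j0 := by
      rw [← zmod_val_cast hab (j1 - j0), ← zmod_val_cast hab (j2 - j0), he]
    exact sub_left_injective this
  · exfalso
    have hk : (j2 - j0).val + b = (j1 - j0).val + a := by omega
    have : j2 - j0 + (b : ZMod a) = j1 - j0 := by
      have h5 : (((j2 - j0).val + b : ℕ) : ZMod a) = (((j1 - j0).val + a : ℕ) : ZMod a) := by
        rw [hk]
      push_cast [zmod_val_cast hab] at h5
      simpa using h5
    have hj2 : j2 = j1 - (b : ZMod a) := by linear_combination this
    exact not_rel_sub_b hab hj2 h12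
  · exfalso
    have hk : (j1 - j0).val + b = (j2 - j0).val + a := by omega
    have : j1 - j0 + (b : ZMod a) = j2 - j0 := by
      have h5 : (((j1 - j0).val + b : ℕ) : ZMod a) = (((j2 - j0).val + a : ℕ) : ZMod a) := by
        rw [hk]
      push_cast [zmod_val_cast hab] at h5
      simpa using h5
    have hj1 : j1 = j2 - (b : ZMod a) := by linear_combination this
    exact not_rel_sub_b hab hj1 h21
  · have hvv : (j1 - j0).val = (j2 - j0).val := by omega
    have : j1 - j0 = j2 - j0 := by
      rw [← zmod_val_cast hab (j1 - j0), ← zmod_val_cast hab (j2 - j0), hvv]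
    exact sub_left_injective this

/-- Katona's bound: a pairwise overlapping set of arc-positions has at most `b` elements. -/
lemma katona_bound (hab : 2 * b + 1 ≤ a) {J : Finset (ZMod a)}
    (hJ : ∀ j ∈ J, ∀ k ∈ J, rel a b j k) : J.card ≤ b := by
  rcases J.eq_empty_or_nonempty with rfl | ⟨j0, hj0⟩
  · simp
  calc J.card ≤ (Finset.range b).card := by
        apply Finset.card_le_card_of_injOn (gval a b j0)
        · intro j hj
          simp only [Finset.mem_coe, Finset.mem_range]
          exact gval_lt hab (hJ j hj j0 hj0)
        · intro j1 hj1 j2 hj2 he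
          exact gval_inj hab (hJ j1 hj1 j0 hj0) (hJ j2 hj2 j0 hj0)
            (hJ j1 hj1 j2 hj2) (hJ j2 hj2 j1 hj1) he
    _ = b := Finset.card_range b


variable {a b : ℕ}

lemma not_rel_far (hab : 2 * b + 1 ≤ a) {j k : ZMod a} {c : ℕ} (hc1 : b ≤ c) (hc2 : c ≤ a - b)
    (h : k = j - (c : ZMod a)) : ¬ rel a b j k := by
  rintro ⟨t, s, ht, hs, he⟩
  subst h
  have : ((t + c : ℕ) : ZMod a) = (s : ZMod a) := by
    push_cast
    linear_combination he
  have := natCast_zmod_inj hab (by omega) (by omega) this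
  omega

/-- the image of a window under `w + ·` has `b` elements -/
lemma card_window (hab : 2 * b + 1 ≤ a) (w : ZMod a) :
    ((Finset.range b).image (fun (t : ℕ) => w + (t : ZMod a))).card = b := by
  rw [Finset.card_image_of_injOn, Finset.card_range]
  intro t ht s hs h
  simp only [Finset.coe_range, Set.mem_Iio] at ht hs
  exact natCast_zmod_inj hab (by omega) (by omega) (add_left_cancel h)

lemma gval_S (hab : 2 * b + 1 ≤ a) (j0 : ZMod a) {t : ℕ} (ht : t < b) :
    gval a b j0 (j0 + (t : ZMod a)) = t := by
  have h1 : j0 + (t : ZMod a) - j0 = (t : ZMod a) := by ring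
  rw [gval, h1, ZMod.val_natCast_of_lt (by omega), if_pos ht]

lemma gval_E (hab : 2 * b + 1 ≤ a) (j0 : ZMod a) {t : ℕ} (ht : t < b) (ht1 : 1 ≤ t) :
    gval a b j0 (j0 + (t : ZMod a) - (b : ZMod a)) = t := by
  have h1 : j0 + (t : ZMod a) - (b : ZMod a) - j0 = ((a + t - b : ℕ) : ZMod a) := by
    have ha0 : ((a : ℕ) : ZMod a) = 0 := ZMod.natCast_self a
    rw [Nat.cast_sub (by omega), Nat.cast_add, ha0]
    ring
  rw [gval, h1, ZMod.val_natCast_of_lt (by omega), if_neg (by omega)]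
  omega

/-- dichotomy: for each `1 ≤ t < b`, exactly one of the `S`/`E` positions is in `J` -/
lemma dichotomy (hab : 2 * b + 1 ≤ a) {J : Finset (ZMod a)}
    (hJ : ∀ j ∈ J, ∀ k ∈ J, rel a b j k) (hcard : J.card = b)
    {j0 : ZMod a} (hj0 : j0 ∈ J) {t : ℕ} (ht : t < b) (ht1 : 1 ≤ t) :
    (j0 + (t : ZMod a) ∈ J ∧ j0 + (t : ZMod a) - (b : ZMod a) ∉ J) ∨
    (j0 + (t : ZMod a) ∉ J ∧ j0 + (t : ZMod a) - (b : ZMod a) ∈ J) := by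
  -- the image of gval on J is exactly range b
  have himg : Finset.image (gval a b j0) J = Finset.range b := by
    apply Finset.eq_of_subset_of_card_le
    · intro v hv
      simp only [Finset.mem_image] at hv
      obtain ⟨j, hj, rfl⟩ := hv
      exact Finset.mem_range.mpr (gval_lt hab (hJ j hj j0 hj0))
    · rw [Finset.card_range, Finset.card_image_of_injOn, hcard]
      intro j1 hj1 j2 hj2 he
      exact gval_inj hab (hJ j1 hj1 j0 hj0) (hJ j2 hj2 j0 hj0)
        (hJ j1 hj1 j2 hj2) (hJ j2 hj2 j1 hj1) he
  have hsur : ∃ j ∈ J, gval a b j0 j = t := by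
    have : t ∈ Finset.image (gval a b j0) J := by rw [himg]; exact Finset.mem_range.mpr ht
    simpa using this
  obtain ⟨j, hj, hgj⟩ := hsur
  have hnotboth : ¬ (j0 + (t : ZMod a) ∈ J ∧ j0 + (t : ZMod a) - (b : ZMod a) ∈ J) := by
    rintro ⟨hS, hE⟩
    have hne : j0 + (t : ZMod a) ≠ j0 + (t : ZMod a) - (b : ZMod a) := by
      intro h
      have : ((b : ℕ) : ZMod a) = ((0 : ℕ) : ZMod a) := by
        push_cast
        linear_combination h
      have := natCast_zmod_inj hab (by omega) (by omega) this
      omega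
    exact hne (gval_inj hab (hJ _ hS j0 hj0) (hJ _ hE j0 hj0) (hJ _ hS _ hE) (hJ _ hE _ hS)
      ((gval_S hab j0 ht).trans (gval_E hab j0 ht ht1).symm))
  -- j is one of the two positions
  have hj2 : j = j0 + (t : ZMod a) ∨ j = j0 + (t : ZMod a) - (b : ZMod a) := by
    rcases rel_val hab (hJ j hj j0 hj0) with h1 | h2
    · left
      rw [gval, if_pos h1] at hgj
      have : j - j0 = (t : ZMod a) := by rw [← zmod_val_cast hab (j - j0), hgj]
      linear_combination this
    · right
      rw [gval, if_neg (by omega)] at hgj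
      have hv : (j - j0).val = a + t - b := by omega
      have : j - j0 = ((a + t - b : ℕ) : ZMod a) := by rw [← zmod_val_cast hab (j - j0), hv]
      have h2 : j - j0 = (t : ZMod a) - (b : ZMod a) := by
        rw [this]
        have ha0 : ((a : ℕ) : ZMod a) = 0 := ZMod.natCast_self a
        rw [Nat.cast_sub (by omega), Nat.cast_add, ha0]
        ring
      linear_combination h2
  rcases hj2 with rfl | rfl
  · left; exact ⟨hj, fun h => hnotboth ⟨hj, h⟩⟩
  · right; exact ⟨fun h => hnotboth ⟨h, hj⟩, hj⟩

/-- S-positions in J are downward closed -/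
lemma S_downward (hab : 2 * b + 1 ≤ a) {J : Finset (ZMod a)}
    (hJ : ∀ j ∈ J, ∀ k ∈ J, rel a b j k) (hcard : J.card = b)
    {j0 : ZMod a} (hj0 : j0 ∈ J) {u : ℕ} (hu : u + 1 < b)
    (hnu : j0 + (u : ZMod a) ∉ J) : j0 + ((u+1 : ℕ) : ZMod a) ∉ J := by
  have hu1 : 1 ≤ u := by
    by_contra h
    have : u = 0 := by omega
    subst this
    simp only [Nat.cast_zero, add_zero] at hnu
    exact hnu hj0
  have hE : j0 + (u : ZMod a) - (b : ZMod a) ∈ J := by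
    rcases dichotomy hab hJ hcard hj0 (by omega : u < b) hu1 with ⟨h1, _⟩ | ⟨_, h2⟩
    · exact absurd h1 hnu
    · exact h2
  intro hS
  have hrel := hJ _ hS _ hE
  apply not_rel_far hab (c := b + 1) (by omega) (by omega) ?_ hrel
  push_cast
  ring

lemma S_downward' (hab : 2 * b + 1 ≤ a) {J : Finset (ZMod a)}
    (hJ : ∀ j ∈ J, ∀ k ∈ J, rel a b j k) (hcard : J.card = b)
    {j0 : ZMod a} (hj0 : j0 ∈ J) {u v : ℕ} (hv : v < b) (huv : u ≤ v)
    (hnu : j0 + (u : ZMod a) ∉ J) : j0 + (v : ZMod a) ∉ J := by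
  induction v with
  | zero =>
    have : u = 0 := by omega
    subst this
    exact hnu
  | succ n ih =>
    rcases Nat.lt_or_ge u (n+1) with h | h
    · exact S_downward hab hJ hcard hj0 hv (ih (by omega) (by omega))
    · have : u = n + 1 := by omega
      subst this
      exact hnu

/-- Katona window lemma: a pairwise-overlapping family of exactly `b` arc positions
is a set of `b` consecutive positions. -/
lemma katona_window (hab : 2 * b + 1 ≤ a) (hb : 0 < b) {J : Finset (ZMod a)}
    (hJ : ∀ j ∈ J, ∀ k ∈ J, rel a b j k) (hcard : J.card = b) :
    ∃ w : ZMod a, ∀ j, j ∈ J ↔ ∃ t < b, j = w + (t : ZMod a) := by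
  have hne : J.Nonempty := by
    rw [← Finset.card_pos, hcard]; exact hb
  obtain ⟨j0, hj0⟩ := hne
  by_cases hall : ∀ u < b, j0 + (u : ZMod a) ∈ J
  · refine ⟨j0, fun j => ?_⟩
    constructor
    · intro hj
      -- J equals the window by cardinality
      have hsub : (Finset.range b).image (fun (t : ℕ) => j0 + (t : ZMod a)) ⊆ J := by
        intro x hx
        simp only [Finset.mem_image, Finset.mem_range] at hx
        obtain ⟨t, ht, rfl⟩ := hx
        exact hall t ht
      have := Finset.eq_of_subset_of_card_le hsub (by rw [hcard, card_window hab])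
      rw [← this] at hj
      simp only [Finset.mem_image, Finset.mem_range] at hj
      obtain ⟨t, ht, h⟩ := hj
      exact ⟨t, ht, h.symm⟩
    · rintro ⟨t, ht, rfl⟩
      exact hall t ht
  · push_neg at hall
    obtain ⟨u1, hu1b, hu1⟩ := hall
    -- least non-S index
    have hex : ∃ u, u < b ∧ j0 + (u : ZMod a) ∉ J := ⟨u1, hu1b, hu1⟩
    classical
    let u0 := Nat.find hex
    obtain ⟨hu0b, hu0⟩ : u0 < b ∧ j0 + (u0 : ZMod a) ∉ J := Nat.find_spec hex
    have hu0min : ∀ u < u0, j0 + (u : ZMod a) ∈ J := by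
      intro u hu
      by_contra h
      have hple : u < b ∧ j0 + (u : ZMod a) ∉ J := ⟨hu.trans hu0b, h⟩
      have hle : u0 ≤ u := Nat.find_le hple
      exact (not_lt.mpr hle) hu
    have hu01 : 1 ≤ u0 := by
      by_contra h
      have : u0 = 0 := by omega
      rw [this] at hu0
      simp only [Nat.cast_zero, add_zero] at hu0
      exact hu0 hj0
    -- for u0 ≤ u < b : E position in J
    have hEs : ∀ u, u0 ≤ u → u < b → j0 + (u : ZMod a) - (b : ZMod a) ∈ J := by
      intro u h1 h2
      have hnS : j0 + (u : ZMod a) ∉ J := S_downward' hab hJ hcard hj0 h2 h1 hu0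
      rcases dichotomy hab hJ hcard hj0 h2 (by omega) with ⟨hS, _⟩ | ⟨_, hE⟩
      · exact absurd hS hnS
      · exact hE
    refine ⟨j0 + (u0 : ZMod a) - (b : ZMod a), fun j => ?_⟩
    have hwin : ∀ t < b, j0 + (u0 : ZMod a) - (b : ZMod a) + (t : ZMod a) ∈ J := by
      intro t ht
      rcases Nat.lt_or_ge t (b - u0) with h | h
      · -- u := u0 + t ∈ [u0, b-1]
        have he : j0 + (u0 : ZMod a) - (b : ZMod a) + (t : ZMod a)
            = j0 + ((u0 + t : ℕ) : ZMod a) - (b : ZMod a) := by push_cast; ring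
        rw [he]
        exact hEs (u0 + t) (by omega) (by omega)
      · -- u := u0 + t - b ∈ [0, u0 - 1]
        have he : j0 + (u0 : ZMod a) - (b : ZMod a) + (t : ZMod a)
            = j0 + ((u0 + t - b : ℕ) : ZMod a) := by
          rw [Nat.cast_sub (by omega)]
          push_cast
          ring
        rw [he]
        exact hu0min (u0 + t - b) (by omega)
    have hsub : (Finset.range b).image
        (fun (t : ℕ) => j0 + (u0 : ZMod a) - (b : ZMod a) + (t : ZMod a)) ⊆ J := by
      intro x hx
      simp only [Finset.mem_image, Finset.mem_range] at hx
      obtain ⟨t, ht, rfl⟩ := hx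
      exact hwin t ht
    have heq := Finset.eq_of_subset_of_card_le hsub (by rw [hcard, card_window hab])
    constructor
    · intro hj
      rw [← heq] at hj
      simp only [Finset.mem_image, Finset.mem_range] at hj
      obtain ⟨t, ht, h⟩ := hj
      exact ⟨t, ht, h.symm⟩
    · rintro ⟨t, ht, rfl⟩
      exact hwin t ht

/-- if both ends of a window are in `J`, the whole window is -/
lemma window_pin (hab : 2 * b + 1 ≤ a) (hb : 0 < b) {J : Finset (ZMod a)}
    (hJ : ∀ j ∈ J, ∀ k ∈ J, rel a b j k) (hcard : J.card = b)
    {j0 : ZMod a} (h0 : j0 ∈ J) (h1 : j0 + ((b - 1 : ℕ) : ZMod a) ∈ J) :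
    ∀ t < b, j0 + (t : ZMod a) ∈ J := by
  obtain ⟨w, hw⟩ := katona_window hab hb hJ hcard
  obtain ⟨i, hi, hji⟩ := (hw j0).mp h0
  obtain ⟨i', hi', hji'⟩ := (hw _).mp h1
  have : ((i + (b - 1) : ℕ) : ZMod a) = ((i' : ℕ) : ZMod a) := by
    have : w + ((i + (b-1) : ℕ) : ZMod a) = w + (i' : ZMod a) := by
      push_cast
      rw [← hji']
      rw [hji]
      push_cast
      ring
    exact add_left_cancel this
  have hii : i + (b - 1) = i' := natCast_zmod_inj hab (by omega) (by omega) this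
  have hi0 : i = 0 := by omega
  subst hi0
  simp only [Nat.cast_zero, add_zero] at hji
  subst hji
  intro t ht
  exact (hw _).mpr ⟨t, ht, rfl⟩


variable {a b : ℕ}

/-- a permutation carrying one finset to another of equal size -/
lemma exists_perm_image {α : Type*} [Fintype α] [DecidableEq α] {A A' : Finset α}
    (h : A.card = A'.card) : ∃ g : Equiv.Perm α, A.image g = A' := by
  classical
  have e : {x // x ∈ A} ≃ {x // x ∈ A'} :=
    Fintype.equivOfCardEq (by simp [Fintype.card_coe, h])
  have en : {x // ¬ x ∈ A} ≃ {x // ¬ x ∈ A'} :=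
    Fintype.equivOfCardEq (by
      rw [Fintype.card_subtype_compl, Fintype.card_subtype_compl]
      simp [Fintype.card_coe, h])
  refine ⟨Equiv.subtypeCongr e en, ?_⟩
  apply Finset.eq_of_subset_of_card_le
  · intro y hy
    simp only [Finset.mem_image] at hy
    obtain ⟨x, hx, rfl⟩ := hy
    have : Equiv.subtypeCongr e en x = (e ⟨x, hx⟩ : α) := by
      simp [Equiv.subtypeCongr, Equiv.sumCompl_symm_apply_of_pos hx]
    rw [this]
    exact (e ⟨x, hx⟩).2
  · rw [Finset.card_image_of_injective _ (Equiv.injective _), h]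

lemma arc_image {f : ZMod a ≃ Fin a} {g : Equiv.Perm (Fin a)} {j : ZMod a} :
    arc b (f.trans g) j = (arc b f j).image g := by
  rw [arc, arc, Finset.image_image]
  rfl

/-- fibers of the arc map have constant size on b-sets -/
lemma fiber_const [NeZero a] (hab : 2 * b + 1 ≤ a) {A A' : Finset (Fin a)}
    (hA : A.card = b) (hA' : A'.card = b) :
    (Finset.univ.filter fun p : (ZMod a ≃ Fin a) × ZMod a => arc b p.1 p.2 = A).card =
    (Finset.univ.filter fun p : (ZMod a ≃ Fin a) × ZMod a => arc b p.1 p.2 = A').card := by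
  classical
  obtain ⟨g, hg⟩ := exists_perm_image (hA.trans hA'.symm)
  apply Finset.card_nbij' (fun p => (p.1.trans g, p.2)) (fun p => (p.1.trans g.symm, p.2))
  · intro p hp
    simp only [Finset.mem_coe, Finset.mem_filter, Finset.mem_univ, true_and] at hp ⊢
    rw [arc_image, hp, hg]
  · intro p hp
    simp only [Finset.mem_coe, Finset.mem_filter, Finset.mem_univ, true_and] at hp ⊢
    have : arc b ((p.1.trans g.symm).trans g) p.2 = A' := by
      have h2 : (p.1.trans g.symm).trans g = p.1 := by ext x; simp
      rw [h2, hp]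
    rw [arc_image] at this
    have h3 : A'.image g.symm = A := by
      rw [← hg, Finset.image_image]
      simp
    rw [← h3, ← this, Finset.image_image]
    simp
  · intro p hp
    exact Prod.ext (by ext x; simp) rfl
  · intro p hp
    exact Prod.ext (by ext x; simp) rfl

/-- every cyclic order has exactly `b` arcs from a maximum intersecting family -/
lemma all_J_card [NeZero a] (hab : 2 * b + 1 ≤ a) (hb : 0 < b) {𝒜 : Finset (Finset (Fin a))}
    (hint : (↑𝒜 : Set (Finset (Fin a))).Intersecting)
    (hsized : ∀ A ∈ 𝒜, A.card = b)
    (hcard : 𝒜.card = (a - 1).choose (b - 1)) :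
    ∀ f : ZMod a ≃ Fin a, (Finset.univ.filter fun j => arc b f j ∈ 𝒜).card = b := by
  classical
  set E := (ZMod a ≃ Fin a)
  set N := Fintype.card E with hN
  -- pairwise rel within each J
  have hrelJ : ∀ f : E, ∀ j ∈ (Finset.univ.filter fun j => arc b f j ∈ 𝒜),
      ∀ k ∈ (Finset.univ.filter fun j => arc b f j ∈ 𝒜), rel a b j k := by
    intro f j hj k hk
    simp only [Finset.mem_filter] at hj hk
    exact rel_of_not_disjoint (hint hj.2 hk.2)
  have hbound : ∀ f : E, (Finset.univ.filter fun j => arc b f j ∈ 𝒜).card ≤ b :=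
    fun f => katona_bound hab (hrelJ f)
  -- the big pair set
  set P : Finset (E × ZMod a) := Finset.univ.filter (fun p => arc b p.1 p.2 ∈ 𝒜) with hP
  -- #P = Σ_f #(J f)
  have h6 : P.card = ∑ f : E, (Finset.univ.filter fun j => arc b f j ∈ 𝒜).card := by
    rw [hP]
    rw [Finset.card_eq_sum_card_fiberwise (f := Prod.fst) (t := Finset.univ)
      (fun p _ => Finset.mem_univ p.1)]
    apply Finset.sum_congr rfl
    intro f _
    apply Finset.card_nbij (fun p => p.2)
    · intro p hp
      simp only [Finset.mem_coe, hP, Finset.filter_filter, Finset.mem_filter, Finset.mem_univ, true_and] at hp ⊢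
      obtain ⟨h1, h2⟩ := hp
      rw [← h2]
      exact h1
    · intro p hp q hq h
      simp only [Finset.mem_coe, hP, Finset.filter_filter, Finset.mem_filter, Finset.mem_univ,
        true_and] at hp hq
      ext
      · rw [hp.2, hq.2]
      · exact h
    · intro j hj
      simp only [Finset.mem_coe, hP, Finset.filter_filter, Finset.mem_filter, Finset.mem_univ,
        true_and, Set.mem_image] at hj ⊢
      exact ⟨(f, j), ⟨hj, rfl⟩, rfl⟩
  -- fiber cardinality
  obtain ⟨A0, -, hA0⟩ := Finset.exists_subset_card_eq (s := (Finset.univ : Finset (Fin a))) (n := b)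
    (by rw [Finset.card_univ, Fintype.card_fin]; omega)
  set K := (Finset.univ.filter fun p : E × ZMod a => arc b p.1 p.2 = A0).card with hK
  have h4 : (Nat.choose a b) * K = N * a := by
    have hfib := Finset.card_eq_sum_card_fiberwise
      (f := fun p : E × ZMod a => arc b p.1 p.2) (s := Finset.univ)
      (t := Finset.powersetCard b Finset.univ)
      (fun p _ => Finset.mem_powersetCard_univ.mpr (card_arc hab _ _))
    have hcu : (Finset.univ : Finset (E × ZMod a)).card = N * a := by
      rw [Finset.card_univ, Fintype.card_prod, ZMod.card]
    rw [hcu] at hfib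
    have hconst : ∀ A ∈ Finset.powersetCard b (Finset.univ : Finset (Fin a)),
        (Finset.univ.filter fun p : E × ZMod a => arc b p.1 p.2 = A).card = K := by
      intro A hA
      exact fiber_const hab (Finset.mem_powersetCard_univ.mp hA) hA0
    rw [Finset.sum_congr rfl hconst, Finset.sum_const, smul_eq_mul,
      Finset.card_powersetCard, Finset.card_univ, Fintype.card_fin] at hfib
    exact hfib.symm
  have h5 : P.card = 𝒜.card * K := by
    rw [hP]
    rw [Finset.card_eq_sum_card_fiberwise
      (f := fun p : E × ZMod a => arc b p.1 p.2) (t := 𝒜)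
      (fun p hp => Finset.mem_coe.mpr (Finset.mem_filter.mp (Finset.mem_coe.mp hp)).2)]
    have hconst : ∀ A ∈ 𝒜,
        ((Finset.univ.filter fun p : E × ZMod a => arc b p.1 p.2 ∈ 𝒜).filter
          (fun p => arc b p.1 p.2 = A)).card = K := by
      intro A hA
      rw [Finset.filter_filter]
      have : ∀ p : E × ZMod a, ((arc b p.1 p.2 ∈ 𝒜) ∧ arc b p.1 p.2 = A) ↔
          arc b p.1 p.2 = A := by
        intro p
        constructor
        · exact And.right
        · intro h; exact ⟨h ▸ hA, h⟩
      rw [Finset.filter_congr (fun p _ => this p)]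
      exact fiber_const hab (hsized A hA) hA0
    rw [Finset.sum_congr rfl hconst, Finset.sum_const, smul_eq_mul]
  -- the choose identity
  have hm : a * 𝒜.card = (Nat.choose a b) * b := by
    rw [hcard]
    obtain ⟨a', rfl⟩ : ∃ a', a = a' + 1 := ⟨a - 1, by omega⟩
    obtain ⟨b', rfl⟩ : ∃ b', b = b' + 1 := ⟨b - 1, by omega⟩
    simpa using Nat.add_one_mul_choose_eq a' b'
  have hPbN : P.card = b * N := by
    have key : P.card * (Nat.choose a b * a) = (b * N) * (Nat.choose a b * a) := by
      calc P.card * (Nat.choose a b * a) = (𝒜.card * K) * (Nat.choose a b * a) := by rw [h5]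
        _ = (a * 𝒜.card) * (Nat.choose a b * K) := by ring
        _ = ((Nat.choose a b) * b) * (N * a) := by rw [hm, h4]
        _ = (b * N) * (Nat.choose a b * a) := by ring
    exact Nat.eq_of_mul_eq_mul_right
      (mul_pos (Nat.choose_pos (by omega)) (by omega)) key
  -- conclude
  by_contra hcon
  push_neg at hcon
  obtain ⟨f0, hf0⟩ := hcon
  have hlt : (Finset.univ.filter fun j => arc b f0 j ∈ 𝒜).card < b :=
    lt_of_le_of_ne (hbound f0) hf0
  have hsum : ∑ f : E, (Finset.univ.filter fun j => arc b f j ∈ 𝒜).card < ∑ _f : E, b :=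
    Finset.sum_lt_sum (fun i _ => hbound i) ⟨f0, Finset.mem_univ f0, hlt⟩
  rw [Finset.sum_const, smul_eq_mul, Finset.card_univ] at hsum
  rw [← h6, hPbN, mul_comm] at hsum
  exact lt_irrefl _ hsum


variable {a b : ℕ}

/-- build a cyclic order from a list enumerating `Fin a` -/
noncomputable def mkOrder [NeZero a] (l : List (Fin a)) (hn : l.Nodup) (hl : l.length = a) :
    ZMod a ≃ Fin a :=
  Equiv.ofBijective (fun j => l.get ⟨j.val, by rw [hl]; exact ZMod.val_lt j⟩)
    ((Fintype.bijective_iff_injective_and_card _).mpr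
      ⟨by
        intro j1 j2 h
        have := List.nodup_iff_injective_get.mp hn h
        have hv : j1.val = j2.val := congrArg Fin.val this
        exact ZMod.val_injective a hv,
       by simp [ZMod.card]⟩)

lemma mkOrder_apply [NeZero a] (l : List (Fin a)) (hn : l.Nodup) (hl : l.length = a)
    (j : ZMod a) : mkOrder l hn hl j = l.get ⟨j.val, by rw [hl]; exact ZMod.val_lt j⟩ := rfl

lemma arc_mkOrder_window [NeZero a] (hab : 2 * b + 1 ≤ a)
    {L1 L2 L3 : List (Fin a)} (hn : (L1 ++ (L2 ++ L3)).Nodup)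
    (hl : (L1 ++ (L2 ++ L3)).length = a) (h2 : L2.length = b) (hpb : L1.length + b ≤ a) :
    arc b (mkOrder _ hn hl) ((L1.length : ℕ) : ZMod a) = L2.toFinset := by
  have key : ∀ (t : ℕ) (ht : t < b),
      (mkOrder _ hn hl) (((L1.length : ℕ) : ZMod a) + (t : ZMod a)) = L2[t]'(by omega) := by
    intro t ht
    rw [mkOrder_apply, List.get_eq_getElem]
    have hval : (((L1.length : ℕ) : ZMod a) + (t : ZMod a)).val = L1.length + t := by
      have : ((L1.length : ℕ) : ZMod a) + (t : ZMod a) = ((L1.length + t : ℕ) : ZMod a) := by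
        push_cast; ring
      rw [this, ZMod.val_natCast_of_lt (by omega)]
    have gen : ∀ (i : ℕ) (hi : i < (L1 ++ (L2 ++ L3)).length), i = L1.length + t →
        (L1 ++ (L2 ++ L3))[i]'hi = L2[t]'(by omega) := by
      intro i hi hi'
      subst hi'
      rw [List.getElem_append_right (by omega)]
      have hidx : L1.length + t - L1.length = t := by omega
      simp only [hidx]
      rw [List.getElem_append_left (by omega)]
    exact gen _ _ hval
  ext x
  rw [List.mem_toFinset, List.mem_iff_getElem]
  simp only [arc, Finset.mem_image, Finset.mem_range]
  constructor
  · rintro ⟨t, ht, hx⟩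
    exact ⟨t, by omega, by rw [← hx, key t ht]⟩
  · rintro ⟨t, ht, hx⟩
    have htb : t < b := by omega
    exact ⟨t, htb, by rw [key t htb]; exact hx⟩


variable {a b : ℕ}

lemma nodup_of_toFinset_univ [NeZero a] {l : List (Fin a)} (hl : l.length = a)
    (htf : l.toFinset = Finset.univ) : l.Nodup := by
  have h1 : l.dedup.length = a := by
    rw [← List.card_toFinset, htf, Finset.card_univ, Fintype.card_fin]
  exact List.dedup_eq_self.mp ((List.dedup_sublist l).eq_of_length (by rw [h1, hl]))

/-- generalized arc lemma with a split hypothesis -/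
lemma arc_mkOrder_eq [NeZero a] (hab : 2 * b + 1 ≤ a) {l : List (Fin a)}
    (hn : l.Nodup) (hl : l.length = a) {L1 L2 L3 : List (Fin a)}
    (hsplit : l = L1 ++ (L2 ++ L3)) (h2 : L2.length = b) (hpb : L1.length + b ≤ a) :
    arc b (mkOrder l hn hl) ((L1.length : ℕ) : ZMod a) = L2.toFinset := by
  subst hsplit
  exact arc_mkOrder_window hab hn hl h2 hpb

variable [NeZero a] (hab : 2 * b + 1 ≤ a) (hb : 0 < b) {𝒜 : Finset (Finset (Fin a))}
  (hint : (↑𝒜 : Set (Finset (Fin a))).Intersecting)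
  (hsized : ∀ A ∈ 𝒜, A.card = b)
  (hJb : ∀ f : ZMod a ≃ Fin a, (Finset.univ.filter fun j => arc b f j ∈ 𝒜).card = b)

include hab hb hint hsized hJb in
/-- The exchange lemma: from two members meeting in a single point `z`, all mixed
sets through `z` are members. -/
lemma anchors_insert {A1 A2 : Finset (Fin a)} (hA1 : A1 ∈ 𝒜) (hA2 : A2 ∈ 𝒜) {z : Fin a}
    (hz : A1 ∩ A2 = {z}) :
    ∀ W ⊆ (A1 ∪ A2).erase z, W.card = b - 1 → insert z W ∈ 𝒜 := by
  intro W hWsub hWcard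
  classical
  -- split W into its A1 and A2 parts
  set S := W ∩ A1.erase z with hSdef
  set T := W \ A1.erase z with hTdef
  have hzA1 : z ∈ A1 := by
    have : z ∈ A1 ∩ A2 := by rw [hz]; exact Finset.mem_singleton_self z
    exact (Finset.mem_inter.mp this).1
  have hzA2 : z ∈ A2 := by
    have : z ∈ A1 ∩ A2 := by rw [hz]; exact Finset.mem_singleton_self z
    exact (Finset.mem_inter.mp this).2
  have hA1c : A1.card = b := hsized A1 hA1
  have hA2c : A2.card = b := hsized A2 hA2
  have hS : S ⊆ A1.erase z := Finset.inter_subset_right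
  have hT : T ⊆ A2.erase z := by
    intro x hx
    rw [hTdef, Finset.mem_sdiff] at hx
    obtain ⟨hxW, hxnot⟩ := hx
    have hxU := hWsub hxW
    rw [Finset.mem_erase, Finset.mem_union] at hxU
    rw [Finset.mem_erase]
    refine ⟨hxU.1, ?_⟩
    rcases hxU.2 with h | h
    · exact absurd (Finset.mem_erase.mpr ⟨hxU.1, h⟩) hxnot
    · exact h
  have hST : S ∪ T = W := by
    rw [hSdef, hTdef, Finset.union_comm]
    exact Finset.sdiff_union_inter W _
  have hSTcard : S.card + T.card = b - 1 := by
    rw [hSdef, hTdef, Finset.card_inter_add_card_sdiff, hWcard]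
  -- the six blocks
  set B1 := A1.erase z \ S with hB1
  set B5 := A2.erase z \ T with hB5
  set B6 := Finset.univ \ (A1 ∪ A2) with hB6
  set l : List (Fin a) := B1.toList ++ (S.toList ++ ([z] ++ (T.toList ++
    (B5.toList ++ B6.toList)))) with hldef
  have hcard_e1 : (A1.erase z).card = b - 1 := by rw [Finset.card_erase_of_mem hzA1, hA1c]
  have hcard_e2 : (A2.erase z).card = b - 1 := by rw [Finset.card_erase_of_mem hzA2, hA2c]
  have hB1c : B1.card = b - 1 - S.card := by rw [hB1, Finset.card_sdiff_of_subset hS, hcard_e1]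
  have hB5c : B5.card = b - 1 - T.card := by rw [hB5, Finset.card_sdiff_of_subset hT, hcard_e2]
  have hU12 : (A1 ∪ A2).card = 2 * b - 1 := by
    have := Finset.card_union_add_card_inter A1 A2
    rw [hz, hA1c, hA2c, Finset.card_singleton] at this
    omega
  have hB6c : B6.card = a - (2 * b - 1) := by
    rw [hB6, Finset.card_sdiff_of_subset (Finset.subset_univ _), Finset.card_univ, Fintype.card_fin, hU12]
  have hScard : S.card ≤ b - 1 := by omega
  have hTcard : T.card ≤ b - 1 := by omega
  have hlen : l.length = a := by
    rw [hldef]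
    simp only [List.length_append, List.length_cons, List.length_nil, Finset.length_toList]
    rw [hB1c, hB5c, hB6c]
    omega
  have htf : l.toFinset = Finset.univ := by
    apply Finset.eq_univ_of_forall
    intro x
    rw [hldef]
    simp only [List.toFinset_append, List.toFinset_cons, List.toFinset_nil,
      Finset.toList_toFinset, Finset.mem_union, Finset.mem_insert,
      Finset.notMem_empty, or_false]
    by_cases hxS : x ∈ S
    · tauto
    by_cases hxT : x ∈ T
    · tauto
    by_cases hxz : x = z
    · tauto
    by_cases hx1 : x ∈ A1
    · have : x ∈ B1 := by
        rw [hB1, Finset.mem_sdiff, Finset.mem_erase]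
        exact ⟨⟨hxz, hx1⟩, hxS⟩
      tauto
    by_cases hx2 : x ∈ A2
    · have : x ∈ B5 := by
        rw [hB5, Finset.mem_sdiff, Finset.mem_erase]
        exact ⟨⟨hxz, hx2⟩, hxT⟩
      tauto
    · have : x ∈ B6 := by
        rw [hB6, Finset.mem_sdiff, Finset.mem_union]
        exact ⟨Finset.mem_univ x, by tauto⟩
      tauto
  have hn : l.Nodup := nodup_of_toFinset_univ hlen htf
  set f := mkOrder l hn hlen with hf
  set J := (Finset.univ.filter fun j => arc b f j ∈ 𝒜) with hJ
  have hrelJ : ∀ j ∈ J, ∀ k ∈ J, rel a b j k := by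
    intro j hj k hk
    rw [hJ, Finset.mem_filter] at hj hk
    exact rel_of_not_disjoint (hint hj.2 hk.2)
  -- arc at 0 is A1
  have harc0 : arc b f (((List.length ([] : List (Fin a)) : ℕ)) : ZMod a) =
      (B1.toList ++ (S.toList ++ [z])).toFinset := by
    apply arc_mkOrder_eq hab hn hlen
      (L1 := []) (L2 := B1.toList ++ (S.toList ++ [z]))
      (L3 := T.toList ++ (B5.toList ++ B6.toList))
    · rw [hldef]; simp [List.append_assoc]
    · simp only [List.length_append, List.length_cons, List.length_nil, Finset.length_toList]
      omega
    · simp only [List.length_nil]; omega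
  have harc0' : arc b f (0 : ZMod a) = A1 := by
    have h1 : (B1.toList ++ (S.toList ++ [z])).toFinset = A1 := by
      simp only [List.toFinset_append, List.toFinset_cons, List.toFinset_nil,
        Finset.toList_toFinset]
      rw [insert_empty_eq]
      have e1 : B1 ∪ (S ∪ {z}) = (B1 ∪ S) ∪ {z} := by rw [Finset.union_assoc]
      have e2 : (A1.erase z) ∪ ({z} : Finset (Fin a)) = insert z (A1.erase z) := by
        rw [Finset.union_comm, ← Finset.insert_eq]
      rw [e1, hB1, Finset.sdiff_union_of_subset hS, e2, Finset.insert_erase hzA1]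
    have h2 : (((List.length ([] : List (Fin a)) : ℕ)) : ZMod a) = (0 : ZMod a) := by
      simp
    rw [← h2, harc0, h1]
  -- arc at b-1 is A2
  have harcb : arc b f ((((B1.toList ++ S.toList).length : ℕ)) : ZMod a) =
      ([z] ++ (T.toList ++ B5.toList)).toFinset := by
    apply arc_mkOrder_eq hab hn hlen
      (L1 := B1.toList ++ S.toList) (L2 := [z] ++ (T.toList ++ B5.toList))
      (L3 := B6.toList)
    · rw [hldef]; simp [List.append_assoc]
    · simp only [List.length_append, List.length_cons, List.length_nil, Finset.length_toList]
      omega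
    · simp only [List.length_append, Finset.length_toList]
      omega
  have hlen1 : (B1.toList ++ S.toList).length = b - 1 := by
    simp only [List.length_append, Finset.length_toList]
    omega
  have harcb' : arc b f (((b - 1 : ℕ)) : ZMod a) = A2 := by
    have h1 : ([z] ++ (T.toList ++ B5.toList)).toFinset = A2 := by
      simp only [List.toFinset_append, List.toFinset_cons, List.toFinset_nil,
        Finset.toList_toFinset]
      rw [insert_empty_eq]
      have e0 : ({z} : Finset (Fin a)) ∪ (T ∪ B5) = insert z (T ∪ B5) := by
        rw [← Finset.insert_eq]
      rw [e0, hB5, Finset.union_sdiff_of_subset hT, Finset.insert_erase hzA2]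
    rw [← hlen1, harcb, h1]
  -- arc at b-1-#S is the mixed set
  have harcm : arc b f (((B1.toList.length : ℕ)) : ZMod a) =
      (S.toList ++ ([z] ++ T.toList)).toFinset := by
    apply arc_mkOrder_eq hab hn hlen
      (L1 := B1.toList) (L2 := S.toList ++ ([z] ++ T.toList))
      (L3 := B5.toList ++ B6.toList)
    · rw [hldef]; simp [List.append_assoc]
    · simp only [List.length_append, List.length_cons, List.length_nil, Finset.length_toList]
      omega
    · simp only [Finset.length_toList]
      omega
  have harcm' : arc b f (((b - 1 - S.card : ℕ)) : ZMod a) = insert z W := by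
    have h1 : (S.toList ++ ([z] ++ T.toList)).toFinset = insert z W := by
      simp only [List.toFinset_append, List.toFinset_cons, List.toFinset_nil,
        Finset.toList_toFinset]
      rw [insert_empty_eq]
      have e0 : S ∪ ({z} ∪ T) = insert z (S ∪ T) := by
        ext y
        simp only [Finset.mem_union, Finset.mem_insert, Finset.mem_singleton]
        tauto
      rw [e0, hST]
    have h2 : B1.toList.length = b - 1 - S.card := by
      rw [Finset.length_toList, hB1c]
    rw [← h2, harcm, h1]
  -- membership in J
  have h0J : (0 : ZMod a) ∈ J := by
    rw [hJ, Finset.mem_filter]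
    exact ⟨Finset.mem_univ _, by rw [harc0']; exact hA1⟩
  have hbJ : (0 : ZMod a) + (((b - 1 : ℕ)) : ZMod a) ∈ J := by
    rw [zero_add, hJ, Finset.mem_filter]
    exact ⟨Finset.mem_univ _, by rw [harcb']; exact hA2⟩
  have hmid := window_pin hab hb hrelJ (hJb f) h0J hbJ (b - 1 - S.card) (by omega)
  rw [zero_add, hJ, Finset.mem_filter] at hmid
  rw [harcm'] at hmid
  exact hmid.2

include hab hb hint hsized hJb in
/-- confinement: members avoiding `z` live inside `(A1 ∪ A2).erase z`. -/
lemma anchors_confine {A1 A2 : Finset (Fin a)} (hA1 : A1 ∈ 𝒜) (hA2 : A2 ∈ 𝒜) {z : Fin a}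
    (hz : A1 ∩ A2 = {z}) :
    ∀ A ∈ 𝒜, z ∉ A → A ⊆ (A1 ∪ A2).erase z := by
  intro A hA hzA
  classical
  rcases Nat.lt_or_ge b 2 with hb2 | hb2
  · -- b = 1 : vacuous since A must contain z
    exfalso
    have hone : b = 1 := by omega
    have hzA1 : z ∈ A1 := by
      have : z ∈ A1 ∩ A2 := by rw [hz]; exact Finset.mem_singleton_self z
      exact (Finset.mem_inter.mp this).1
    have hA1z : A1 = {z} := by
      obtain ⟨w, hw⟩ := Finset.card_eq_one.mp (by rw [hsized A1 hA1, hone])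
      rw [hw] at hzA1 ⊢
      rw [Finset.mem_singleton.mp hzA1]
    have := hint hA hA1
    rw [Finset.not_disjoint_iff] at this
    obtain ⟨x, hx1, hx2⟩ := this
    rw [hA1z, Finset.mem_singleton] at hx2
    subst hx2
    exact hzA hx1
  set U := (A1 ∪ A2).erase z with hU
  have hzA1 : z ∈ A1 := by
    have : z ∈ A1 ∩ A2 := by rw [hz]; exact Finset.mem_singleton_self z
    exact (Finset.mem_inter.mp this).1
  have hUcard : U.card = 2 * b - 2 := by
    have hcu := Finset.card_union_add_card_inter A1 A2
    rw [hz, hsized A1 hA1, hsized A2 hA2, Finset.card_singleton] at hcu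
    rw [hU, Finset.card_erase_of_mem (Finset.mem_union_left _ hzA1)]
    omega
  have hkey : (U \ A).card ≤ b - 2 := by
    by_contra hcon
    push_neg at hcon
    obtain ⟨W, hWsub, hWcard⟩ :=
      Finset.exists_subset_card_eq (s := U \ A) (n := b - 1) (by omega)
    have hW : insert z W ∈ 𝒜 :=
      anchors_insert hab hb hint hsized hJb hA1 hA2 hz W
        (hWsub.trans (Finset.sdiff_subset)) hWcard
    have hdisj : Disjoint A (insert z W) := by
      rw [Finset.disjoint_right]
      intro x hx
      rw [Finset.mem_insert] at hx
      rcases hx with rfl | hx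
      · exact hzA
      · have := hWsub hx
        rw [Finset.mem_sdiff] at this
        exact this.2
    exact hint hA hW hdisj
  have hUA : b ≤ (U ∩ A).card := by
    have h1 : (U \ A).card + (U ∩ A).card = U.card := by
      rw [Finset.card_sdiff_add_card_inter]
    omega
  have h2 : A ∩ U = A := by
    apply Finset.eq_of_subset_of_card_le Finset.inter_subset_left
    have hAc : A.card = b := hsized A hA
    rw [Finset.inter_comm]
    omega
  rw [← h2]
  exact Finset.inter_subset_right


variable {a b : ℕ}

/-- Uniqueness in Erdős–Ko–Rado: a maximum intersecting family is a star. -/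
theorem ekr_star (hab : 2 * b + 1 ≤ a) (hb : 0 < b) {𝒜 : Finset (Finset (Fin a))}
    (hint : (↑𝒜 : Set (Finset (Fin a))).Intersecting)
    (hsized : ∀ A ∈ 𝒜, A.card = b)
    (hcard : 𝒜.card = (a - 1).choose (b - 1)) :
    ∃ x : Fin a, ∀ A ∈ 𝒜, x ∈ A := by
  classical
  haveI : NeZero a := ⟨by omega⟩
  -- trivial case b = 1
  rcases Nat.lt_or_ge b 2 with hb2 | hb2
  · have hone : b = 1 := by omega
    have h1 : 𝒜.card = 1 := by rw [hcard, hone]; simp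
    obtain ⟨A0, hA0⟩ := Finset.card_eq_one.mp h1
    have : A0.card = 1 := by
      rw [← hone]
      exact hsized A0 (by rw [hA0]; exact Finset.mem_singleton_self A0)
    obtain ⟨x, hx⟩ := Finset.card_eq_one.mp this
    refine ⟨x, fun A hA => ?_⟩
    rw [hA0, Finset.mem_singleton] at hA
    rw [hA, hx]
    exact Finset.mem_singleton_self x
  have hJb := all_J_card hab hb hint hsized hcard
  -- find initial anchors
  set f0 : ZMod a ≃ Fin a := Fintype.equivOfCardEq (by simp [ZMod.card]) with hf0
  have hrelJ : ∀ j ∈ (Finset.univ.filter fun j => arc b f0 j ∈ 𝒜),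
      ∀ k ∈ (Finset.univ.filter fun j => arc b f0 j ∈ 𝒜), rel a b j k := by
    intro j hj k hk
    rw [Finset.mem_filter] at hj hk
    exact rel_of_not_disjoint (hint hj.2 hk.2)
  obtain ⟨w, hw⟩ := katona_window hab hb hrelJ (hJb f0)
  have hA1m : arc b f0 w ∈ 𝒜 := by
    have : w ∈ (Finset.univ.filter fun j => arc b f0 j ∈ 𝒜) :=
      (hw w).mpr ⟨0, hb, by simp⟩
    exact (Finset.mem_filter.mp this).2
  have hA2m : arc b f0 (w + ((b - 1 : ℕ) : ZMod a)) ∈ 𝒜 := by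
    have : w + ((b - 1 : ℕ) : ZMod a) ∈ (Finset.univ.filter fun j => arc b f0 j ∈ 𝒜) :=
      (hw _).mpr ⟨b - 1, by omega, rfl⟩
    exact (Finset.mem_filter.mp this).2
  set A1 := arc b f0 w with hA1def
  set A2 := arc b f0 (w + ((b - 1 : ℕ) : ZMod a)) with hA2def
  set z := f0 (w + ((b - 1 : ℕ) : ZMod a)) with hzdef
  have hzint : A1 ∩ A2 = {z} := by
    ext x
    rw [Finset.mem_inter, Finset.mem_singleton]
    constructor
    · rintro ⟨hx1, hx2⟩
      rw [hA1def, arc] at hx1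
      rw [hA2def, arc] at hx2
      simp only [Finset.mem_image, Finset.mem_range] at hx1 hx2
      obtain ⟨t, ht, hxt⟩ := hx1
      obtain ⟨t', ht', hxt'⟩ := hx2
      have := f0.injective (hxt.trans hxt'.symm)
      have he : (t : ZMod a) = (((b - 1) + t' : ℕ) : ZMod a) := by
        push_cast
        linear_combination this
      have := natCast_zmod_inj hab (by omega) (by omega) he
      have ht0 : t' = 0 ∧ t = b - 1 := by omega
      rw [← hxt, ht0.2, hzdef]
    · rintro rfl
      constructor
      · rw [hA1def, arc]
        simp only [Finset.mem_image, Finset.mem_range]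
        exact ⟨b - 1, by omega, rfl⟩
      · rw [hA2def, arc]
        simp only [Finset.mem_image, Finset.mem_range]
        exact ⟨0, by omega, by simp [hzdef]⟩
  set U := (A1 ∪ A2).erase z with hUdef
  have hzA1 : z ∈ A1 := by
    have : z ∈ A1 ∩ A2 := by rw [hzint]; exact Finset.mem_singleton_self z
    exact (Finset.mem_inter.mp this).1
  have hzU : z ∉ U := Finset.notMem_erase z _
  have hUcard : U.card = 2 * b - 2 := by
    have hcu := Finset.card_union_add_card_inter A1 A2
    rw [hzint, hsized A1 hA1m, hsized A2 hA2m, Finset.card_singleton] at hcu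
    rw [hUdef, Finset.card_erase_of_mem (Finset.mem_union_left _ hzA1)]
    omega
  -- main dichotomy
  by_cases hstar : ∀ A ∈ 𝒜, z ∈ A
  · exact ⟨z, hstar⟩
  push_neg at hstar
  obtain ⟨D, hD, hzD⟩ := hstar
  exfalso
  have hDU : D ⊆ U := anchors_confine hab hb hint hsized hJb hA1m hA2m hzint D hD hzD
  have hDcard : D.card = b := hsized D hD
  have hUDcard : (U \ D).card = b - 2 := by
    rw [Finset.card_sdiff_of_subset hDU, hUcard, hDcard]
    omega
  -- every member is inside insert z U
  have hconf : ∀ A ∈ 𝒜, A ⊆ insert z U := by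
    intro A hA
    by_contra hnc
    obtain ⟨x, hxA, hxU⟩ := Finset.not_subset.mp hnc
    have hyA : ∀ y ∈ D, y ∈ A := by
      intro y hy
      by_contra hyA
      -- build E_y
      have hyU : y ∉ U \ D := fun h => (Finset.mem_sdiff.mp h).2 hy
      have hWsub : insert y (U \ D) ⊆ U := by
        intro u hu
        rw [Finset.mem_insert] at hu
        rcases hu with rfl | hu
        · exact hDU hy
        · exact (Finset.mem_sdiff.mp hu).1
      have hWcard : (insert y (U \ D)).card = b - 1 := by
        rw [Finset.card_insert_of_notMem hyU, hUDcard]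
        omega
      have hEy : insert z (insert y (U \ D)) ∈ 𝒜 :=
        anchors_insert hab hb hint hsized hJb hA1m hA2m hzint _ hWsub hWcard
      set Ey := insert z (insert y (U \ D)) with hEydef
      have hDEy : D ∩ Ey = {y} := by
        ext u
        rw [Finset.mem_inter, Finset.mem_singleton, hEydef, Finset.mem_insert,
          Finset.mem_insert]
        constructor
        · rintro ⟨huD, rfl | rfl | hu⟩
          · exact absurd huD hzD
          · rfl
          · exact absurd huD (Finset.mem_sdiff.mp hu).2
        · rintro rfl
          exact ⟨hy, Or.inr (Or.inl rfl)⟩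
      have hconfy := anchors_confine hab hb hint hsized hJb hD hEy hDEy A hA hyA
      have hsub2 : (D ∪ Ey).erase y ⊆ insert z U := by
        intro u hu
        rw [Finset.mem_erase, Finset.mem_union] at hu
        rw [Finset.mem_insert]
        rcases hu.2 with h | h
        · exact Or.inr (hDU h)
        · rw [hEydef, Finset.mem_insert, Finset.mem_insert] at h
          rcases h with rfl | rfl | h
          · exact Or.inl rfl
          · exact absurd rfl hu.1
          · exact Or.inr (Finset.mem_sdiff.mp h).1
      exact hxU (hsub2 (hconfy hxA))
    have hDA : D ⊆ A := hyA
    have hDA2 : D = A :=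
      Finset.eq_of_subset_of_card_le hDA (le_of_eq ((hsized A hA).trans hDcard.symm))
    rw [← hDA2] at hxA
    exact hxU (Finset.mem_insert_of_mem (hDU hxA))
  -- cardinality contradiction
  have hsub : 𝒜 ⊆ Finset.powersetCard b (insert z U) := by
    intro A hA
    rw [Finset.mem_powersetCard]
    exact ⟨hconf A hA, hsized A hA⟩
  have hle : 𝒜.card ≤ (2 * b - 1).choose b := by
    calc 𝒜.card ≤ (Finset.powersetCard b (insert z U)).card := Finset.card_le_card hsub
      _ = (2 * b - 1).choose b := by
        rw [Finset.card_powersetCard, Finset.card_insert_of_notMem hzU, hUcard]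
        congr 1
        omega
  obtain ⟨b', rfl⟩ : ∃ b', b = b' + 2 := ⟨b - 2, by omega⟩
  have he1 : 2 * (b' + 2) - 1 = 2 * b' + 3 := by omega
  have he2 : (2 * b' + 3).choose (b' + 2) = (2 * b' + 3).choose (b' + 1) := by
    have := Nat.choose_symm (n := 2 * b' + 3) (k := b' + 2) (by omega)
    have h3 : 2 * b' + 3 - (b' + 2) = b' + 1 := by omega
    rw [h3] at this
    exact this.symm
  have he3 : (2 * b' + 4).choose (b' + 1) =
      (2 * b' + 3).choose b' + (2 * b' + 3).choose (b' + 1) :=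
    Nat.choose_succ_succ (2 * b' + 3) b'
  have he4 : 1 ≤ (2 * b' + 3).choose b' := Nat.choose_pos (by omega)
  have he5 : (2 * b' + 4).choose (b' + 1) ≤ (a - 1).choose (b' + 1) :=
    Nat.choose_le_choose _ (by omega)
  have he6 : (a - 1).choose (b' + 2 - 1) = (a - 1).choose (b' + 1) := by congr 1
  rw [hcard, he1, he2, he6] at hle
  omega


end KneserCircle


abbrev KV (a b : ℕ) := {S : Finset (Fin a) // S.card = b}

/-- For `a > 2b`, every homomorphism of the Kneser graph
`KG_{a,b}` to itself is an automorphism. -/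
theorem kneser_hom_is_automorphism (a b : ℕ) (hb : 0 < b) (hab : 2 * b < a)
    (φ : SimpleGraph.fromRel
          (fun s t : {S : Finset (Fin a) // S.card = b} => Disjoint s.1 t.1) →g
        SimpleGraph.fromRel
          (fun s t : {S : Finset (Fin a) // S.card = b} => Disjoint s.1 t.1)) :
    ∃ e : SimpleGraph.fromRel
            (fun s t : {S : Finset (Fin a) // S.card = b} => Disjoint s.1 t.1) ≃g
          SimpleGraph.fromRel
            (fun s t : {S : Finset (Fin a) // S.card = b} => Disjoint s.1 t.1),
      ∀ v, e v = φ v := by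
  classical
  have hab' : 2 * b + 1 ≤ a := by omega
  have hadj : ∀ u v : KV a b,
      (SimpleGraph.fromRel (fun s t : KV a b => Disjoint s.1 t.1)).Adj u v ↔
        u ≠ v ∧ Disjoint u.1 v.1 := by
    intro u v
    rw [SimpleGraph.fromRel_adj]
    constructor
    · rintro ⟨hne, h | h⟩
      · exact ⟨hne, h⟩
      · exact ⟨hne, h.symm⟩
    · rintro ⟨hne, h⟩
      exact ⟨hne, Or.inl h⟩
  -- the preimage families
  set F : Fin a → Finset (KV a b) :=
    fun i => Finset.univ.filter (fun v : KV a b => i ∈ (φ v).1) with hF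
  set 𝒜 : Fin a → Finset (Finset (Fin a)) := fun i => (F i).image (fun v => v.1) with h𝒜
  have h𝒜card : ∀ i, (𝒜 i).card = (F i).card := by
    intro i
    rw [h𝒜]
    exact Finset.card_image_of_injective _ Subtype.val_injective
  have hmem𝒜 : ∀ i (A : Finset (Fin a)), A ∈ 𝒜 i ↔ ∃ v : KV a b, i ∈ (φ v).1 ∧ v.1 = A := by
    intro i A
    rw [h𝒜, Finset.mem_image]
    constructor
    · rintro ⟨v, hv, rfl⟩
      rw [hF, Finset.mem_filter] at hv
      exact ⟨v, hv.2, rfl⟩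
    · rintro ⟨v, hv, rfl⟩
      exact ⟨v, by rw [hF, Finset.mem_filter]; exact ⟨Finset.mem_univ _, hv⟩, rfl⟩
  have hint : ∀ i, (↑(𝒜 i) : Set (Finset (Fin a))).Intersecting := by
    intro i A hA B hB hdisj
    rw [Finset.mem_coe, hmem𝒜] at hA hB
    obtain ⟨u, hu, rfl⟩ := hA
    obtain ⟨w, hw, rfl⟩ := hB
    by_cases huw : u = w
    · subst huw
      rw [disjoint_self] at hdisj
      have := u.2
      rw [hdisj] at this
      simp only [Finset.bot_eq_empty, Finset.card_empty] at this
      omega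
    · have hadjuw := (hadj u w).mpr ⟨huw, hdisj⟩
      have := φ.map_adj hadjuw
      rw [hadj] at this
      exact (Finset.disjoint_left.mp this.2 hu) hw
  have hsized : ∀ i, ∀ A ∈ 𝒜 i, A.card = b := by
    intro i A hA
    rw [hmem𝒜] at hA
    obtain ⟨v, _, rfl⟩ := hA
    exact v.2
  have hEKR : ∀ i, (𝒜 i).card ≤ (a - 1).choose (b - 1) := by
    intro i
    apply Finset.erdos_ko_rado (hint i)
    · intro A hA
      exact hsized i A hA
    · rw [Nat.le_div_iff_mul_le (by omega : 0 < 2)]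
      omega
  -- counting
  have hVcard : Fintype.card (KV a b) = a.choose b := by
    rw [show Fintype.card (KV a b) = Fintype.card {S : Finset (Fin a) // S.card = b} from rfl,
      Fintype.card_subtype]
    have he : (Finset.univ.filter fun S : Finset (Fin a) => S.card = b) =
        Finset.powersetCard b Finset.univ := by
      ext S
      simp [Finset.mem_powersetCard_univ]
    rw [he, Finset.card_powersetCard, Finset.card_univ, Fintype.card_fin]
  have hsum : ∑ i : Fin a, (F i).card = (a.choose b) * b := by
    have h1 : ∀ i, (F i).card = ∑ v : KV a b, if i ∈ (φ v).1 then 1 else 0 := by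
      intro i
      rw [hF, Finset.card_filter]
    simp_rw [h1]
    rw [Finset.sum_comm]
    have h2 : ∀ v : KV a b, ∑ i : Fin a, (if i ∈ (φ v).1 then 1 else 0) = b := by
      intro v
      rw [← Finset.card_filter]
      have : (Finset.univ.filter fun i => i ∈ (φ v).1) = (φ v).1 := by
        ext i; simp
      rw [this]
      exact (φ v).2
    simp_rw [h2]
    rw [Finset.sum_const, smul_eq_mul, Finset.card_univ, hVcard]
  have hchoose : a * ((a - 1).choose (b - 1)) = (a.choose b) * b := by
    obtain ⟨a', rfl⟩ : ∃ a', a = a' + 1 := ⟨a - 1, by omega⟩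
    obtain ⟨b', rfl⟩ : ∃ b', b = b' + 1 := ⟨b - 1, by omega⟩
    simpa using Nat.add_one_mul_choose_eq a' b'
  have heach : ∀ i, (𝒜 i).card = (a - 1).choose (b - 1) := by
    by_contra hcon
    push_neg at hcon
    obtain ⟨i0, hi0⟩ := hcon
    have hlt : (𝒜 i0).card < (a - 1).choose (b - 1) := lt_of_le_of_ne (hEKR i0) hi0
    have hsum2 : ∑ i : Fin a, (𝒜 i).card < ∑ _i : Fin a, (a - 1).choose (b - 1) :=
      Finset.sum_lt_sum (fun i _ => hEKR i) ⟨i0, Finset.mem_univ i0, hlt⟩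
    rw [Finset.sum_const, smul_eq_mul, Finset.card_univ, Fintype.card_fin] at hsum2
    have : ∑ i : Fin a, (𝒜 i).card = (a.choose b) * b := by
      rw [← hsum]
      exact Finset.sum_congr rfl fun i _ => h𝒜card i
    omega
  -- stars
  have hstar : ∀ i : Fin a, ∃ x, ∀ A ∈ 𝒜 i, x ∈ A := by
    intro i
    exact ekr_star hab' hb (hint i) (hsized i) (heach i)
  choose σ hσ using hstar
  -- full star: 𝒜 i equals all b-sets containing σ i
  have hfull : ∀ i, ∀ A : Finset (Fin a), A.card = b → σ i ∈ A → A ∈ 𝒜 i := by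
    intro i
    set star : Finset (Finset (Fin a)) :=
      (Finset.powersetCard (b - 1) (Finset.univ.erase (σ i))).image (insert (σ i))
      with hstardef
    have hstarcard : star.card = (a - 1).choose (b - 1) := by
      rw [hstardef, Finset.card_image_of_injOn, Finset.card_powersetCard,
        Finset.card_erase_of_mem (Finset.mem_univ _), Finset.card_univ, Fintype.card_fin]
      intro s hs t ht hst
      rw [Finset.mem_coe, Finset.mem_powersetCard] at hs ht
      have hs' : σ i ∉ s := fun h => (Finset.mem_erase.mp (hs.1 h)).1 rfl
      have ht' : σ i ∉ t := fun h => (Finset.mem_erase.mp (ht.1 h)).1 rfl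
      rw [← Finset.erase_insert hs', ← Finset.erase_insert ht', hst]
    have hsub : 𝒜 i ⊆ star := by
      intro A hA
      have hAi := hσ i A hA
      have hAcard := hsized i A hA
      rw [hstardef, Finset.mem_image]
      refine ⟨A.erase (σ i), ?_, Finset.insert_erase hAi⟩
      rw [Finset.mem_powersetCard]
      constructor
      · intro x hx
        rw [Finset.mem_erase] at hx ⊢
        exact ⟨hx.1, Finset.mem_univ x⟩
      · rw [Finset.card_erase_of_mem hAi, hAcard]
    have heq : 𝒜 i = star :=
      Finset.eq_of_subset_of_card_le hsub (le_of_eq (hstarcard.trans (heach i).symm))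
    intro A hAcard hAσ
    rw [heq, hstardef, Finset.mem_image]
    refine ⟨A.erase (σ i), ?_, Finset.insert_erase hAσ⟩
    rw [Finset.mem_powersetCard]
    constructor
    · intro x hx
      rw [Finset.mem_erase] at hx ⊢
      exact ⟨hx.1, Finset.mem_univ x⟩
    · rw [Finset.card_erase_of_mem hAσ, hAcard]
  -- the fundamental equivalence
  have hiff : ∀ (i : Fin a) (v : KV a b), i ∈ (φ v).1 ↔ σ i ∈ v.1 := by
    intro i v
    constructor
    · intro h
      exact hσ i v.1 ((hmem𝒜 i v.1).mpr ⟨v, h, rfl⟩)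
    · intro h
      have := hfull i v.1 v.2 h
      rw [hmem𝒜] at this
      obtain ⟨u, hu, huv⟩ := this
      have : u = v := Subtype.ext huv
      rwa [this] at hu
  -- σ is bijective
  have hpre : ∀ v : KV a b, (φ v).1 = Finset.univ.filter (fun i => σ i ∈ v.1) := by
    intro v
    ext i
    rw [Finset.mem_filter]
    constructor
    · intro h; exact ⟨Finset.mem_univ _, (hiff i v).mp h⟩
    · intro h; exact (hiff i v).mpr h.2
  have hfibsum : ∀ B : Finset (Fin a), B.card = b →
      (Finset.univ.filter fun i => σ i ∈ B).card = b := by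
    intro B hB
    have := (φ ⟨B, hB⟩).2
    rw [hpre ⟨B, hB⟩] at this
    exact this
  set fib : Fin a → ℕ := fun x => (Finset.univ.filter fun i => σ i = x).card with hfib
  have hfib_decomp : ∀ B : Finset (Fin a),
      (Finset.univ.filter fun i => σ i ∈ B).card = ∑ x ∈ B, fib x := by
    intro B
    rw [Finset.card_eq_sum_card_fiberwise
      (f := σ) (t := B) (fun i hi => Finset.mem_coe.mpr (Finset.mem_filter.mp (Finset.mem_coe.mp hi)).2)]
    apply Finset.sum_congr rfl
    intro x hx
    rw [Finset.filter_filter]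
    congr 1
    apply Finset.filter_congr
    intro i _
    constructor
    · exact And.right
    · intro h; exact ⟨h ▸ hx, h⟩
  have hfib_eq : ∀ x y : Fin a, fib x = fib y := by
    intro x y
    by_cases hxy : x = y
    · rw [hxy]
    obtain ⟨W, hWsub, hWcard⟩ := Finset.exists_subset_card_eq
      (s := (Finset.univ.erase x).erase y) (n := b - 1)
      (by
        rw [Finset.card_erase_of_mem (Finset.mem_erase.mpr ⟨Ne.symm hxy, Finset.mem_univ _⟩),
          Finset.card_erase_of_mem (Finset.mem_univ _), Finset.card_univ, Fintype.card_fin]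
        omega)
    have hxW : x ∉ W := fun h => (Finset.mem_erase.mp (Finset.mem_erase.mp (hWsub h)).2).1 rfl
    have hyW : y ∉ W := fun h => (Finset.mem_erase.mp (hWsub h)).1 rfl
    have h1 : ∑ u ∈ insert x W, fib u = b := by
      rw [← hfib_decomp]
      exact hfibsum _ (by rw [Finset.card_insert_of_notMem hxW, hWcard]; omega)
    have h2 : ∑ u ∈ insert y W, fib u = b := by
      rw [← hfib_decomp]
      exact hfibsum _ (by rw [Finset.card_insert_of_notMem hyW, hWcard]; omega)
    rw [Finset.sum_insert hxW] at h1
    rw [Finset.sum_insert hyW] at h2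
    omega
  have hfib_total : ∑ x : Fin a, fib x = a := by
    rw [← hfib_decomp Finset.univ]
    have : (Finset.univ.filter fun i : Fin a => σ i ∈ Finset.univ) = Finset.univ := by
      ext i; simp
    rw [this, Finset.card_univ, Fintype.card_fin]
  have hfib_one : ∀ x : Fin a, fib x = 1 := by
    intro x
    have hconst : ∑ y : Fin a, fib y = a * fib x :=
      by
        rw [Finset.sum_congr rfl (fun y _ => hfib_eq y x), Finset.sum_const, smul_eq_mul,
          Finset.card_univ, Fintype.card_fin]
    rw [hfib_total] at hconst
    have ha : 0 < a := by omega
    rcases Nat.eq_zero_or_pos (fib x) with h | h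
    · rw [h] at hconst; omega
    · nlinarith
  have hσinj : Function.Injective σ := by
    intro i j hij
    have h1 : i ∈ Finset.univ.filter (fun k => σ k = σ i) := by
      rw [Finset.mem_filter]; exact ⟨Finset.mem_univ _, rfl⟩
    have h2 : j ∈ Finset.univ.filter (fun k => σ k = σ i) := by
      rw [Finset.mem_filter]; exact ⟨Finset.mem_univ _, hij.symm⟩
    exact Finset.card_le_one.mp (le_of_eq (hfib_one (σ i))) i h1 j h2
  have hσbij : Function.Bijective σ :=
    (Fintype.bijective_iff_injective_and_card σ).mpr ⟨hσinj, rfl⟩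
  set τ : Fin a ≃ Fin a := (Equiv.ofBijective σ hσbij).symm with hτ
  have hτσ : ∀ i, τ (σ i) = i := by
    intro i
    rw [hτ]
    exact (Equiv.ofBijective σ hσbij).symm_apply_apply i
  have hστ : ∀ x, σ (τ x) = x := by
    intro x
    have := (Equiv.ofBijective σ hσbij).apply_symm_apply x
    rw [hτ]
    exact this
  have himg : ∀ v : KV a b, (φ v).1 = v.1.image τ := by
    intro v
    ext i
    rw [hiff i v, Finset.mem_image]
    constructor
    · intro h
      exact ⟨σ i, h, hτσ i⟩
    · rintro ⟨y, hy, rfl⟩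
      rwa [hστ y]
  -- build the isomorphism
  set E : KV a b ≃ KV a b :=
    { toFun := fun v => ⟨v.1.image τ, by
        rw [Finset.card_image_of_injective _ τ.injective]; exact v.2⟩
      invFun := fun v => ⟨v.1.image τ.symm, by
        rw [Finset.card_image_of_injective _ τ.symm.injective]; exact v.2⟩
      left_inv := by
        intro v
        apply Subtype.ext
        simp [Finset.image_image]
      right_inv := by
        intro v
        apply Subtype.ext
        simp [Finset.image_image] } with hE
  refine ⟨⟨E, ?_⟩, ?_⟩
  · intro u v
    rw [hadj, hadj]
    have h1 : (E u).1 = u.1.image τ := rfl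
    have h2 : (E v).1 = v.1.image τ := rfl
    rw [h1, h2, Finset.disjoint_image τ.injective]
    constructor
    · rintro ⟨hne, h⟩
      exact ⟨fun he => hne (by rw [he]), h⟩
    · rintro ⟨hne, h⟩
      exact ⟨fun he => hne (E.injective he), h⟩
  · intro v
    apply Subtype.ext
    show (E v).1 = (φ v).1
    have h1 : (E v).1 = v.1.image τ := rfl
    rw [h1, ← himg v]
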